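/- Let V be a real Hilbert space, A: V → V a bounded linear operator that is strongly monotone with constant Cₛ > 0 (i.e., ⟨A(u−v), u−v⟩ ≥ Cₛ‖u−v‖² for all u, v), and suppose ψ⁰-type terms satisfy a relaxed monotonicity with constant m < Cₛ. If E₁, E₂ ∈ V both satisfy ⟨A Eᵢ, v⟩ + Ψ⁰(Eᵢ; v) ≥ ⟨f, v⟩ for all v ∈ V, where Ψ⁰(u₁; u₂−u₁) + Ψ⁰(u₂; u₁−u₂) ≤ m‖u₁−u₂‖² for all u₁, u₂ ∈ V, then E₁ = E₂. -/
import Mathlib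


open RealInnerProductSpace

theorem uniqueness_of_hvi_solution
    {V : Type*} [NormedAddCommGroup V] [InnerProductSpace ℝ V] [CompleteSpace V]
    (A : V →L[ℝ] V) (Cs : ℝ) (hCs : 0 < Cs)
    (hA : ∀ u v : V, ⟪A (u - v), u - v⟫ ≥ Cs * ‖u - v‖ ^ 2)
    (Ψ₀ : V → V → ℝ) (m : ℝ) (hm : 0 ≤ m) (hmCs : m < Cs)
    (hΨ : ∀ u₁ u₂ : V, Ψ₀ u₁ (u₂ - u₁) + Ψ₀ u₂ (u₁ - u₂) ≤ m * ‖u₁ - u₂‖ ^ 2)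
    (f : V) (E₁ E₂ : V)
    (h₁ : ∀ v : V, ⟪A E₁, v⟫ + Ψ₀ E₁ v ≥ ⟪f, v⟫)
    (h₂ : ∀ v : V, ⟪A E₂, v⟫ + Ψ₀ E₂ v ≥ ⟪f, v⟫) :
    E₁ = E₂ := by
  have ha := h₁ (E₂ - E₁)
  have hb := h₂ (E₁ - E₂)
  have hΨ' := hΨ E₁ E₂
  have hA' := hA E₁ E₂
  have hlin : ⟪A E₁, E₂ - E₁⟫ + ⟪A E₂, E₁ - E₂⟫ = -⟪A (E₁ - E₂), E₁ - E₂⟫ := by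
    rw [map_sub]
    simp [inner_sub_left, inner_sub_right]
    ring
  have hf : ⟪f, E₂ - E₁⟫ + ⟪f, E₁ - E₂⟫ = 0 := by
    simp [inner_sub_right]
  have key : Cs * ‖E₁ - E₂‖ ^ 2 ≤ m * ‖E₁ - E₂‖ ^ 2 := by
    nlinarith [ha, hb, hΨ', hA', hlin, hf]
  have hnorm : ‖E₁ - E₂‖ ^ 2 ≤ 0 := by nlinarith
  have : E₁ - E₂ = 0 := by
    have := sq_nonneg ‖E₁ - E₂‖
    have : ‖E₁ - E₂‖ ^ 2 = 0 := le_antisymm hnorm this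
    simpa [pow_eq_zero_iff] using this
  exact sub_eq_zero.mp this
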